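/- arXiv:0906.0887 — 6 statements merged into one kernel-verified Lean document; each statement's English description precedes it below -/
import Mathlib

section
/- Let B ⊆ ℝ² be a closed, convex, lattice-free set with f in the interior of B. Suppose φ ∈ ℝ^k satisfies, for each i ∈ {1,…,k}: either rⁱ lies in the recession cone of B (i.e., B + λrⁱ ⊆ B for all λ ≥ 0) and φᵢ = 0, or φᵢ > 0 and f + rⁱ/φᵢ lies on the topological boundary of B. Then every point (x,s) ∈ P(R,f) satisfies ∑_{i=1}^k φᵢ sᵢ ≥ 1; that is, ∑_{i=1}^k φᵢ sᵢ ≥ 1 is a valid inequality for conv(P(R,f)). -/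
open Set Pointwise

abbrev Pt : Type := Fin 2 → ℝ

def IsIntPt (x : Pt) : Prop := ∀ j, ∃ z : ℤ, x j = (z : ℝ)

def IsRatPt (x : Pt) : Prop := ∀ j, ∃ q : ℚ, x j = (q : ℝ)

/-- The mixed-integer set `P(R,f)`. -/
def mixedP (k : ℕ) (r : Fin k → Pt) (f : Pt) : Set (Pt × (Fin k → ℝ)) :=
  {p | IsIntPt p.1 ∧ (∀ i, 0 ≤ p.2 i) ∧ p.1 = f + ∑ i, p.2 i • r i}

/-- The linear relaxation `P(R,f)⁰`. -/
def relaxP (k : ℕ) (r : Fin k → Pt) (f : Pt) : Set (Pt × (Fin k → ℝ)) :=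
  {p | (∀ i, 0 ≤ p.2 i) ∧ p.1 = f + ∑ i, p.2 i • r i}

/-- The convex cone generated by a set (all nonnegative combinations). -/
def coneGen (S : Set Pt) : Set Pt :=
  {x | ∃ (n : ℕ) (c : Fin n → ℝ) (v : Fin n → Pt),
    (∀ j, 0 ≤ c j) ∧ (∀ j, v j ∈ S) ∧ x = ∑ j, c j • v j}

/-- The induced lattice-free set `L_α`. -/
def inducedSet (k : ℕ) (r : Fin k → Pt) (f : Pt) (α : Fin k → ℝ) : Set Pt :=
  convexHull ℝ ({f} ∪ {x | ∃ i, 0 < α i ∧ x = f + (α i)⁻¹ • r i}) +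
    coneGen {x | ∃ i, α i = 0 ∧ x = r i}

def LatticeFree (S : Set Pt) : Prop := ∀ x ∈ interior S, ¬ IsIntPt x

/-- Validity of `∑ αᵢ sᵢ ≥ γ` for `conv(P(R,f))`. -/
def ValidIneq (k : ℕ) (r : Fin k → Pt) (f : Pt) (α : Fin k → ℝ) (γ : ℝ) : Prop :=
  ∀ p ∈ mixedP k r f, γ ≤ ∑ i, α i * p.2 i

noncomputable def affDim {V : Type*} [AddCommGroup V] [Module ℝ V] (S : Set V) : ℕ :=
  Module.finrank ℝ (affineSpan ℝ S).direction

/-- Facet-defining inequality: valid and its face of the closed convex hull has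
affine dimension exactly one less. -/
def IsFacet (k : ℕ) (r : Fin k → Pt) (f : Pt) (α : Fin k → ℝ) (γ : ℝ) : Prop :=
  ValidIneq k r f α γ ∧
  affDim {p ∈ closure (convexHull ℝ (mixedP k r f)) | ∑ i, α i * p.2 i = γ} + 1 =
    affDim (convexHull ℝ (mixedP k r f))

def splitClosure (k : ℕ) (C : Set (Pt × (Fin k → ℝ))) : Set (Pt × (Fin k → ℝ)) :=
  ⋂ (π : Fin 2 → ℤ) (π₀ : ℤ),
    convexHull ℝ ((C ∩ {p | ∑ j, (π j : ℝ) * p.1 j ≤ (π₀ : ℝ)}) ∪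
      (C ∩ {p | (π₀ : ℝ) + 1 ≤ ∑ j, (π j : ℝ) * p.1 j}))

def closures (k : ℕ) (r : Fin k → Pt) (f : Pt) : ℕ → Set (Pt × (Fin k → ℝ))
  | 0 => relaxP k r f
  | n + 1 => splitClosure k (closures k r f n)

/-- The split rank of `∑ αᵢ sᵢ ≥ γ` w.r.t. `P(R,f)⁰`: least `j` such that the
inequality is valid on the `j`-th split closure, `⊤` if none exists. -/
noncomputable def splitRank (k : ℕ) (r : Fin k → Pt) (f : Pt) (α : Fin k → ℝ) (γ : ℝ) : ℕ∞ :=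
  sInf {j : ℕ∞ | ∃ n : ℕ, j = (n : ℕ∞) ∧ ∀ p ∈ closures k r f n, γ ≤ ∑ i, α i * p.2 i}

def IsSplitSet (S : Set Pt) : Prop :=
  ∃ (π : Fin 2 → ℤ) (π₀ : ℤ), π ≠ 0 ∧
    S = {x : Pt | (π₀ : ℝ) ≤ ∑ j, (π j : ℝ) * x j ∧ ∑ j, (π j : ℝ) * x j ≤ (π₀ : ℝ) + 1}

/-- Triangle of type `T¹`. -/
def IsT1 (S : Set Pt) : Prop :=
  ∃ v : Fin 3 → Pt, AffineIndependent ℝ v ∧ (∀ i, IsIntPt (v i)) ∧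
    S = convexHull ℝ (Set.range v) ∧
    ∀ i j, i ≠ j → ∃! z, z ∈ openSegment ℝ (v i) (v j) ∧ IsIntPt z

/-- Triangle of type `T^{2A}`. -/
def IsT2A (S : Set Pt) : Prop :=
  ∃ v0 v1 v2 : Pt, AffineIndependent ℝ ![v0, v1, v2] ∧ ¬ IsIntPt v0 ∧
    S = convexHull ℝ {v0, v1, v2} ∧
    (∃ z1 z2 : Pt, z1 ≠ z2 ∧ IsIntPt z1 ∧ IsIntPt z2 ∧
      z1 ∈ segment ℝ v1 v2 ∧ z2 ∈ segment ℝ v1 v2) ∧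
    (∃! z, z ∈ openSegment ℝ v0 v1 ∧ IsIntPt z) ∧
    (∃! z, z ∈ openSegment ℝ v0 v2 ∧ IsIntPt z)

/-- Triangle of type `T^{2B}`. -/
def IsT2B (S : Set Pt) : Prop :=
  ∃ v0 v1 v2 : Pt, AffineIndependent ℝ ![v0, v1, v2] ∧ ¬ IsIntPt v0 ∧
    S = convexHull ℝ {v0, v1, v2} ∧
    (∃ z1 z2 : Pt, z1 ≠ z2 ∧ IsIntPt z1 ∧ IsIntPt z2 ∧
      z1 ∈ segment ℝ v1 v2 ∧ z2 ∈ segment ℝ v1 v2) ∧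
    (∃! z, z ∈ openSegment ℝ v0 v1 ∧ IsIntPt z) ∧
    (∀ z ∈ openSegment ℝ v0 v2, ¬ IsIntPt z)

/-- Triangle of type `T³`. -/
def IsT3 (S : Set Pt) : Prop :=
  ∃ v0 v1 v2 : Pt, AffineIndependent ℝ ![v0, v1, v2] ∧
    ¬ IsIntPt v0 ∧ ¬ IsIntPt v1 ∧ ¬ IsIntPt v2 ∧
    S = convexHull ℝ {v0, v1, v2} ∧
    (∃! z, z ∈ openSegment ℝ v0 v1 ∧ IsIntPt z) ∧
    (∃! z, z ∈ openSegment ℝ v1 v2 ∧ IsIntPt z) ∧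
    (∃! z, z ∈ openSegment ℝ v0 v2 ∧ IsIntPt z) ∧
    (∀ z, IsIntPt z → z ∈ frontier S →
      z ∈ openSegment ℝ v0 v1 ∨ z ∈ openSegment ℝ v1 v2 ∨ z ∈ openSegment ℝ v0 v2)

/-- A quadrilateral with vertices `v 0, v 1, v 2, v 3` in cyclic order; each `vᵢ`
is an extreme point of the hull and each side lies on the boundary. -/
def IsQuadWith (S : Set Pt) (v : Fin 4 → Pt) : Prop :=
  S = convexHull ℝ (Set.range v) ∧
  (∀ i, v i ∈ Set.extremePoints ℝ S) ∧
  (∀ i : Fin 4, segment ℝ (v i) (v (i + 1)) ⊆ frontier S)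

/-- Quadrilateral of type `Q¹`. -/
def IsQ1 (S : Set Pt) : Prop :=
  ∃ v : Fin 4 → Pt, IsQuadWith S v ∧
    (∃ z1 z2 : Pt, z1 ≠ z2 ∧ IsIntPt z1 ∧ IsIntPt z2 ∧
      z1 ∈ segment ℝ (v 0) (v 1) ∧ z2 ∈ segment ℝ (v 0) (v 1)) ∧
    (∃ j : Fin 4, j ≠ 0 ∧
      (∀ i : Fin 4, i ≠ 0 → i ≠ j → ∃ z, IsIntPt z ∧ z ∈ segment ℝ (v i) (v (i + 1))) ∧
      (∀ z ∈ openSegment ℝ (v j) (v (j + 1)), ¬ IsIntPt z)) ∧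
    (∃ T : Set Pt, (IsT1 T ∨ IsT2A T) ∧ S ⊆ T)

/-- Quadrilateral of type `Q²`. -/
def IsQ2 (S : Set Pt) : Prop :=
  ∃ v : Fin 4 → Pt, IsQuadWith S v ∧ (∀ i, ¬ IsIntPt (v i)) ∧
    ∀ i : Fin 4, ∃! z, z ∈ openSegment ℝ (v i) (v (i + 1)) ∧ IsIntPt z

lemma recess_interior {B : Set Pt} (v : Pt) (h : ∀ x ∈ B, x + v ∈ B) :
    ∀ x ∈ interior B, x + v ∈ interior B := by
  intro x hx
  have hopen : IsOpen ((· + v) '' interior B) :=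
    (isOpenMap_add_right v) _ isOpen_interior
  have hsub : (· + v) '' interior B ⊆ B := by
    rintro _ ⟨y, hy, rfl⟩
    exact h y (interior_subset hy)
  exact interior_maximal hsub hopen ⟨x, hx, rfl⟩

theorem intersection_cut_valid (k : ℕ)
    (hk : 1 ≤ k)
    (r : Fin k → Pt) (f : Pt)
    (hr_rat : ∀ i, IsRatPt (r i)) (hr_ne : ∀ i, r i ≠ 0)
    (hf_rat : IsRatPt f) (hf_int : ¬ IsIntPt f)
    (hne : (mixedP k r f).Nonempty)
    (B : Set Pt) (hBclosed : IsClosed B) (hBconv : Convex ℝ B)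
    (hBfree : LatticeFree B) (hfB : f ∈ interior B)
    (φ : Fin k → ℝ)
    (hφ : ∀ i,
      (φ i = 0 ∧ ∀ lam : ℝ, 0 ≤ lam → ∀ x ∈ B, x + lam • r i ∈ B) ∨
      (0 < φ i ∧ f + (φ i)⁻¹ • r i ∈ frontier B)) :
    ∀ p ∈ mixedP k r f, 1 ≤ ∑ i, φ i * p.2 i := by
  classical
  intro p hp
  obtain ⟨hint, hs, hxeq⟩ := hp
  by_contra hlt
  push_neg at hlt
  set s := p.2 with hs_def
  have hφ0 : ∀ i, 0 ≤ φ i := by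
    intro i
    rcases hφ i with ⟨h1, _⟩ | ⟨h1, _⟩
    · exact h1.ge
    · exact h1.le
  set t := ∑ i, φ i * s i with ht_def
  have hterm : ∀ i ∈ Finset.univ, 0 ≤ φ i * s i :=
    fun i _ => mul_nonneg (hφ0 i) (hs i)
  have ht0 : 0 ≤ t := Finset.sum_nonneg hterm
  have ht1 : t < 1 := hlt
  set F := Finset.univ.filter (fun i => 0 < φ i) with hF
  have htF : ∑ i ∈ F, φ i * s i = t := by
    rw [ht_def, hF]
    apply Finset.sum_filter_of_ne
    intro i _ h
    exact lt_of_le_of_ne (hφ0 i) (Ne.symm (left_ne_zero_of_mul h))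
  have key : f + ∑ i ∈ F, s i • r i ∈ interior B := by
    rcases eq_or_lt_of_le ht0 with htz | htz
    · have hz : ∀ i ∈ F, s i • r i = (0 : Pt) := by
        intro i hi
        have hφi : 0 < φ i := (Finset.mem_filter.mp hi).2
        have h0 : φ i * s i = 0 :=
          (Finset.sum_eq_zero_iff_of_nonneg hterm).mp htz.symm i (Finset.mem_univ i)
        rcases mul_eq_zero.mp h0 with h | h
        · exact absurd h hφi.ne'
        · simp [h]
      rw [Finset.sum_congr rfl hz]
      simpa using hfB
    · have hBsub : frontier B ⊆ B := by
        exact hBclosed.frontier_subset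
      set z : Pt := ∑ i ∈ F, ((φ i * s i) / t) • (f + (φ i)⁻¹ • r i) with hz_def
      have hzB : z ∈ B := by
        apply hBconv.sum_mem
        · intro i _; exact div_nonneg (hterm i (Finset.mem_univ i)) htz.le
        · rw [← Finset.sum_div, htF, div_self htz.ne']
        · intro i hi
          rcases hφ i with ⟨h1, _⟩ | ⟨_, h2⟩
          · exact absurd h1 (Finset.mem_filter.mp hi).2.ne'
          · exact hBsub h2
      have hx' : (1 - t) • f + t • z ∈ interior B :=
        hBconv.combo_interior_closure_mem_interior hfB (subset_closure hzB)
          (by linarith) ht0 (by ring)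
      have heq : (1 - t) • f + t • z = f + ∑ i ∈ F, s i • r i := by
        rw [hz_def, Finset.smul_sum]
        have hterm2 : ∀ i ∈ F, t • (((φ i * s i) / t) • (f + (φ i)⁻¹ • r i))
            = (φ i * s i) • f + s i • r i := by
          intro i hi
          have hφi : 0 < φ i := (Finset.mem_filter.mp hi).2
          rw [smul_smul, smul_add, smul_smul]
          congr 1
          · congr 1
            field_simp
          · congr 1
            field_simp
        rw [Finset.sum_congr rfl hterm2, Finset.sum_add_distrib, ← Finset.sum_smul, htF]
        module
      rw [← heq]; exact hx'
  have hrec : ∀ G : Finset (Fin k), (∀ i ∈ G, ¬ 0 < φ i) →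
      f + ∑ i ∈ F, s i • r i + ∑ i ∈ G, s i • r i ∈ interior B := by
    intro G
    induction G using Finset.induction with
    | empty => intro _; simpa using key
    | @insert a G' hnot ih =>
      intro hG
      rcases hφ a with ⟨h1, h2⟩ | ⟨h1, _⟩
      · have hprev := ih (fun i hi => hG i (Finset.mem_insert_of_mem hi))
        have h3 := recess_interior (s a • r a) (fun x hx => h2 (s a) (hs a) x hx)
          _ hprev
        rw [Finset.sum_insert hnot]
        convert h3 using 1
        abel
      · exact absurd h1 (hG a (Finset.mem_insert_self a G'))
  have hsum := Finset.sum_filter_add_sum_filter_not Finset.univ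
    (fun i => 0 < φ i) (fun i => s i • r i)
  have hmem : p.1 ∈ interior B := by
    have := hrec (Finset.univ.filter (fun i => ¬ 0 < φ i))
      (fun i hi => (Finset.mem_filter.mp hi).2)
    rw [hxeq, ← hsum, ← add_assoc]
    exact this
  exact hBfree p.1 hmem hint
end

section
/- If ∑_{i=1}^k αᵢ sᵢ ≥ 1 with α ∈ ℝ^k, α ≥ 0, is a valid inequality for conv(P(R,f)), then the induced set L_α := conv({f} ∪ {f + rⁱ/αᵢ : αᵢ > 0}) + cone{rⁱ : αᵢ = 0} is convex and lattice-free. -/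
open Set Pointwise

section Aux

lemma coneGen_convex (S : Set Pt) : Convex ℝ (coneGen S) := by
  intro x hx y hy a b ha hb hab
  obtain ⟨n, c, v, hc, hv, rfl⟩ := hx
  obtain ⟨m, d, w, hd, hw, rfl⟩ := hy
  refine ⟨n + m, Fin.append (fun j => a * c j) (fun j => b * d j),
    Fin.append v w, ?_, ?_, ?_⟩
  · intro j
    refine Fin.addCases (fun j => ?_) (fun j => ?_) j
    · simpa using mul_nonneg ha (hc j)
    · simpa using mul_nonneg hb (hd j)
  · intro j
    refine Fin.addCases (fun j => ?_) (fun j => ?_) j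
    · simpa using hv j
    · simpa using hw j
  · rw [Fin.sum_univ_add]
    simp only [Fin.append_left, Fin.append_right, Finset.smul_sum, smul_smul]

/-- The "slab" description set. -/
def slabM (k : ℕ) (r : Fin k → Pt) (f : Pt) (α : Fin k → ℝ) : Set Pt :=
  {x | ∃ s : Fin k → ℝ, (∀ i, 0 ≤ s i) ∧ x = f + ∑ i, s i • r i ∧ ∑ i, α i * s i ≤ 1}

lemma slabM_convex (k : ℕ) (r : Fin k → Pt) (f : Pt) (α : Fin k → ℝ) :
    Convex ℝ (slabM k r f α) := by
  rintro x ⟨s, hs, rfl, hsum⟩ y ⟨t, ht, rfl, htsum⟩ a b ha hb hab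
  refine ⟨fun i => a * s i + b * t i,
    fun i => add_nonneg (mul_nonneg ha (hs i)) (mul_nonneg hb (ht i)), ?_, ?_⟩
  · have : a • (f + ∑ i, s i • r i) + b • (f + ∑ i, t i • r i)
        = (a + b) • f + ∑ i, (a * s i + b * t i) • r i := by
      simp only [smul_add, Finset.smul_sum, smul_smul, add_smul, Finset.sum_add_distrib]
      abel
    rw [this, hab, one_smul]
  · calc ∑ i, α i * (a * s i + b * t i)
        = a * ∑ i, α i * s i + b * ∑ i, α i * t i := by
          rw [Finset.mul_sum, Finset.mul_sum, ← Finset.sum_add_distrib]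
          congr 1; ext i; ring
      _ ≤ a * 1 + b * 1 := by
          gcongr
      _ = 1 := by rw [mul_one, mul_one, hab]

lemma coneGen_sub (k : ℕ) (r : Fin k → Pt) (α : Fin k → ℝ) (q : Pt)
    (hq : q ∈ coneGen {x | ∃ i, α i = 0 ∧ x = r i}) :
    ∃ t : Fin k → ℝ, (∀ i, 0 ≤ t i) ∧ q = ∑ i, t i • r i ∧ ∑ i, α i * t i = 0 := by
  obtain ⟨n, c, v, hc, hv, rfl⟩ := hq
  choose g hg0 hgr using hv
  refine ⟨fun i => ∑ j ∈ Finset.univ.filter (fun j => g j = i), c j,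
    fun i => Finset.sum_nonneg fun j _ => hc j, ?_, ?_⟩
  · rw [← Finset.sum_fiberwise Finset.univ g (fun j => c j • v j)]
    refine Finset.sum_congr rfl fun i _ => ?_
    rw [Finset.sum_smul]
    refine Finset.sum_congr rfl fun j hj => ?_
    rw [Finset.mem_filter] at hj
    rw [hgr j, hj.2]
  · refine Finset.sum_eq_zero fun i _ => ?_
    rw [Finset.mul_sum]
    refine Finset.sum_eq_zero fun j hj => ?_
    rw [Finset.mem_filter] at hj
    rw [← hj.2, hg0 j, zero_mul]

lemma inducedSet_sub_slabM (k : ℕ) (r : Fin k → Pt) (f : Pt) (α : Fin k → ℝ) :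
    inducedSet k r f α ⊆ slabM k r f α := by
  rintro z ⟨p, hp, q, hq, rfl⟩
  obtain ⟨t, ht, rfl, htsum⟩ := coneGen_sub k r α q hq
  have hpM : p ∈ slabM k r f α := by
    refine convexHull_min ?_ (slabM_convex k r f α) hp
    rintro x (rfl | ⟨i, hi, rfl⟩)
    · exact ⟨0, fun _ => le_rfl, by simp, by simp⟩
    · refine ⟨Pi.single i (α i)⁻¹, ?_, ?_, ?_⟩
      · intro j
        rcases eq_or_ne j i with rfl | h
        · simp [inv_nonneg.mpr hi.le]
        · simp [Pi.single_eq_of_ne h]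
      · congr 1
        rw [Finset.sum_eq_single i]
        · simp
        · intro j _ h; simp [Pi.single_eq_of_ne h]
        · simp
      · rw [Finset.sum_eq_single i]
        · simp [mul_inv_cancel₀ hi.ne']
        · intro j _ h; simp [Pi.single_eq_of_ne h]
        · simp
  obtain ⟨s, hs, rfl, hsum⟩ := hpM
  refine ⟨fun i => s i + t i, fun i => add_nonneg (hs i) (ht i), ?_, ?_⟩
  · simp only [add_smul, Finset.sum_add_distrib]
    abel
  · have : ∑ i, α i * (s i + t i) = ∑ i, α i * s i + ∑ i, α i * t i := by
      rw [← Finset.sum_add_distrib]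
      exact Finset.sum_congr rfl fun i _ => by ring
    rw [this, htsum, add_zero]
    exact hsum

end Aux

theorem induced_set_convex_latticeFree (k : ℕ)
    (hk : 1 ≤ k)
    (r : Fin k → Pt) (f : Pt)
    (hr_rat : ∀ i, IsRatPt (r i)) (hr_ne : ∀ i, r i ≠ 0)
    (hf_rat : IsRatPt f) (hf_int : ¬ IsIntPt f)
    (hne : (mixedP k r f).Nonempty)
    (α : Fin k → ℝ) (hα : ∀ i, 0 ≤ α i)
    (hvalid : ValidIneq k r f α 1) :
    Convex ℝ (inducedSet k r f α) ∧ LatticeFree (inducedSet k r f α) := by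
  constructor
  · exact Convex.add (convex_convexHull ℝ _) (coneGen_convex _)
  · intro x hx hxint
    have hxf : x ≠ f := fun h => hf_int (h ▸ hxint)
    obtain ⟨ε, hε, hball⟩ := Metric.isOpen_iff.mp isOpen_interior x hx
    set d : Pt := x - f with hd
    have hdne : d ≠ 0 := sub_ne_zero.mpr hxf
    have hdnorm : 0 < ‖d‖ := norm_pos_iff.mpr hdne
    set δ : ℝ := ε / (2 * ‖d‖) with hδ
    have hδpos : 0 < δ := by positivity
    have hmem : x + δ • d ∈ inducedSet k r f α := by
      refine interior_subset (hball ?_)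
      rw [Metric.mem_ball, dist_eq_norm]
      have : x + δ • d - x = δ • d := by abel
      rw [this, norm_smul, Real.norm_eq_abs, abs_of_pos hδpos]
      rw [hδ, div_mul_eq_mul_div, mul_comm 2 ‖d‖, ← div_div]
      rw [mul_div_assoc, div_self hdnorm.ne', mul_one]
      linarith
    obtain ⟨s, hs, heq, hsum⟩ := inducedSet_sub_slabM k r f α hmem
    have h1δ : (0:ℝ) < 1 + δ := by linarith
    have heq2 : x = f + ∑ i, ((1 + δ)⁻¹ * s i) • r i := by
      have hxd : x + δ • d = f + (1 + δ) • d := by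
        rw [hd]; simp only [smul_sub, add_smul, one_smul]; abel
      have hdd : (1 + δ) • d = ∑ i, s i • r i := by
        have := heq; rw [hxd] at this
        exact add_left_cancel this
      have : d = ∑ i, ((1 + δ)⁻¹ * s i) • r i := by
        have := congrArg (fun z => (1 + δ)⁻¹ • z) hdd
        simp only [smul_smul, inv_mul_cancel₀ h1δ.ne', one_smul, Finset.smul_sum] at this
        exact this
      rw [hd] at this
      rw [← sub_eq_iff_eq_add'] at *
      rw [← this]
    have hP : (x, fun i => (1 + δ)⁻¹ * s i) ∈ mixedP k r f :=
      ⟨hxint, fun i => mul_nonneg (inv_nonneg.mpr h1δ.le) (hs i), heq2⟩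
    have hval := hvalid _ hP
    simp only at hval
    have : ∑ i, α i * ((1 + δ)⁻¹ * s i) = (1 + δ)⁻¹ * ∑ i, α i * s i := by
      rw [Finset.mul_sum]; congr 1; ext i; ring
    rw [this] at hval
    have : (1 + δ)⁻¹ * ∑ i, α i * s i ≤ (1 + δ)⁻¹ * 1 :=
      mul_le_mul_of_nonneg_left hsum (inv_nonneg.mpr h1δ.le)
    have hlt : (1 + δ)⁻¹ * 1 < 1 := by
      rw [mul_one]
      exact inv_lt_one_of_one_lt₀ (by linarith)
    linarith
end

section
/- (Shape Lemma.) Let R^a ∈ ℚ^{2×k₁} and R^b ∈ ℚ^{2×k₂} have nonzero columns, let f ∈ ℚ² ∖ ℤ², and assume P(R^a,f) ≠ ∅ and P(R^b,f) ≠ ∅. Let ∑_{i=1}^{k₁} αᵢ sᵢ ≥ 1 (α ≥ 0) be valid for conv(P(R^a,f)) with split rank η_a with respect to P(R^a,f)⁰, and let ∑_{i=1}^{k₂} βᵢ sᵢ ≥ 1 (β ≥ 0) be valid for conv(P(R^b,f)) with split rank η_b with respect to P(R^b,f)⁰. If the cone generated by the columns of R^b equals ℝ² and L_α ⊆ L_β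 (where L_α is built from the columns of R^a and L_β from the columns of R^b), then η_a ≤ η_b. -/
open Set Pointwise

/-- Combine representations linearly. -/
lemma repSum {k : ℕ} (r : Fin k → Pt) (β : Fin k → ℝ) {ι : Type*} (t : Finset ι)
    (w : ι → ℝ) (z : ι → Pt) (b : ι → ℝ) (hw : ∀ m ∈ t, 0 ≤ w m)
    (h : ∀ m ∈ t, ∃ μ : Fin k → ℝ, (∀ j, 0 ≤ μ j) ∧ z m = ∑ j, μ j • r j ∧
      ∑ j, β j * μ j ≤ b m) :
    ∃ lam : Fin k → ℝ, (∀ j, 0 ≤ lam j) ∧ (∑ m ∈ t, w m • z m = ∑ j, lam j • r j) ∧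
      ∑ j, β j * lam j ≤ ∑ m ∈ t, w m * b m := by
  have h' : ∀ m : ι, ∃ μ : Fin k → ℝ, (∀ j, 0 ≤ μ j) ∧
      (m ∈ t → (z m = ∑ j, μ j • r j ∧ ∑ j, β j * μ j ≤ b m)) := by
    intro m
    by_cases hm : m ∈ t
    · obtain ⟨μ, h1, h2, h3⟩ := h m hm
      exact ⟨μ, h1, fun _ => ⟨h2, h3⟩⟩
    · exact ⟨0, fun j => le_rfl, fun hmem => absurd hmem hm⟩
  choose μ hμ0 hμt using h'
  refine ⟨fun j => ∑ m ∈ t, w m * μ m j, ?_, ?_, ?_⟩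
  · intro j
    exact Finset.sum_nonneg fun m hm => mul_nonneg (hw m hm) (hμ0 m j)
  · calc ∑ m ∈ t, w m • z m = ∑ m ∈ t, ∑ j, (w m * μ m j) • r j := by
          refine Finset.sum_congr rfl fun m hm => ?_
          rw [(hμt m hm).1, Finset.smul_sum]
          exact Finset.sum_congr rfl fun j _ => (smul_smul _ _ _)
      _ = ∑ j, (∑ m ∈ t, w m * μ m j) • r j := by
          rw [Finset.sum_comm]
          exact Finset.sum_congr rfl fun j _ => (Finset.sum_smul).symm
  · calc ∑ j, β j * ∑ m ∈ t, w m * μ m j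
        = ∑ m ∈ t, w m * ∑ j, β j * μ m j := by
          simp_rw [Finset.mul_sum]
          rw [Finset.sum_comm]
          exact Finset.sum_congr rfl fun m _ => Finset.sum_congr rfl fun j _ => by ring
      _ ≤ ∑ m ∈ t, w m * b m := by
          exact Finset.sum_le_sum fun m hm => mul_le_mul_of_nonneg_left (hμt m hm).2 (hw m hm)

/-- Any point of the induced set `L_β` is `f` plus a nonnegative combination of the rays
with total β-cost at most 1. -/
lemma mem_inducedSet_rep {k : ℕ} (r : Fin k → Pt) (f : Pt) (β : Fin k → ℝ)
    (hβ : ∀ j, 0 ≤ β j) {x : Pt} (hx : x ∈ inducedSet k r f β) :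
    ∃ lam : Fin k → ℝ, (∀ j, 0 ≤ lam j) ∧ x = f + ∑ j, lam j • r j ∧
      ∑ j, β j * lam j ≤ 1 := by
  obtain ⟨h, hh, c, hc, rfl⟩ := hx
  -- hull part
  rw [convexHull_eq] at hh
  obtain ⟨ι, t, w, z, hw0, hw1, hzS, hcm⟩ := hh
  have hcm' : ∑ m ∈ t, w m • z m = h := by
    rw [← Finset.centerMass_eq_of_sum_1 _ _ hw1]; exact hcm
  have hside1 : ∀ m ∈ t, ∃ μ : Fin k → ℝ, (∀ j, 0 ≤ μ j) ∧ (z m - f) = ∑ j, μ j • r j ∧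
      ∑ j, β j * μ j ≤ (fun _ => (1:ℝ)) m := by
    intro m hm
    rcases hzS m hm with hzf | ⟨i, hαi, hzi⟩
    · refine ⟨0, fun j => le_rfl, ?_, ?_⟩
      · simp at hzf; simp [hzf]
      · simp
    · refine ⟨fun j' => if j' = i then (β i)⁻¹ else 0, ?_, ?_, ?_⟩
      · intro j'; by_cases hj : j' = i <;> simp [hj, inv_nonneg.mpr (hβ i)]
      · rw [hzi]; simp [Finset.sum_ite_eq']
      · simp only [mul_ite, mul_zero, Finset.sum_ite_eq', Finset.mem_univ, if_true]
        rw [mul_inv_cancel₀ (ne_of_gt hαi)]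
  obtain ⟨lam1, hlam1_0, hlam1_eq, hlam1_le⟩ := repSum r β t w (fun m => z m - f)
      (fun _ => 1) hw0 hside1
  obtain ⟨n, cc, v, hcc0, hvS, rfl⟩ := hc
  have hside2 : ∀ m ∈ (Finset.univ : Finset (Fin n)), ∃ μ : Fin k → ℝ, (∀ j, 0 ≤ μ j) ∧
      v m = ∑ j, μ j • r j ∧ ∑ j, β j * μ j ≤ (fun _ => (0:ℝ)) m := by
    intro m _
    obtain ⟨j, hbj, hv⟩ := hvS m
    refine ⟨fun j' => if j' = j then 1 else 0, fun j' => by positivity, ?_, ?_⟩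
    · rw [hv]; simp [Finset.sum_ite_eq']
    · simp [mul_ite, hbj, Finset.sum_ite_eq']
  obtain ⟨lam2, hlam2_0, hlam2_eq, hlam2_le⟩ := repSum r β Finset.univ cc v
      (fun _ => 0) (fun m _ => hcc0 m) hside2
  refine ⟨lam1 + lam2, fun j => add_nonneg (hlam1_0 j) (hlam2_0 j), ?_, ?_⟩
  · have e1 : ∑ m ∈ t, w m • (z m - f) = h - f := by
      simp_rw [smul_sub]
      rw [Finset.sum_sub_distrib, hcm', ← Finset.sum_smul, hw1, one_smul]
    have key : h - f + ∑ j : Fin n, cc j • v j = ∑ j, (lam1 + lam2) j • r j := by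
      rw [← e1, hlam1_eq, hlam2_eq]
      simp_rw [Pi.add_apply, add_smul, Finset.sum_add_distrib]
    rw [← key]; abel
  · have e2 : ∑ j, β j * (lam1 + lam2) j =
        (∑ j, β j * lam1 j) + ∑ j, β j * lam2 j := by
      simp_rw [Pi.add_apply, mul_add, Finset.sum_add_distrib]
    rw [e2]
    have h2 : ∑ j, β j * lam2 j ≤ 0 := le_trans hlam2_le (by simp)
    have h1 : ∑ j, β j * lam1 j ≤ 1 := le_trans hlam1_le (by simp [hw1])
    linarith


/-- Extract a near-optimal representation of each ray `ra i` in terms of the `rb j`. -/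
lemma rayRep {k₁ k₂ : ℕ} (ra : Fin k₁ → Pt) (rb : Fin k₂ → Pt) (f : Pt)
    (α : Fin k₁ → ℝ) (β : Fin k₂ → ℝ) (hα : ∀ i, 0 ≤ α i) (hβ : ∀ j, 0 ≤ β j)
    (hsub : inducedSet k₁ ra f α ⊆ inducedSet k₂ rb f β)
    (i : Fin k₁) {ε : ℝ} (hε : 0 < ε) :
    ∃ lam : Fin k₂ → ℝ, (∀ j, 0 ≤ lam j) ∧ ra i = ∑ j, lam j • rb j ∧
      ∑ j, β j * lam j ≤ α i + ε := by
  have hzero : (0 : Pt) ∈ coneGen {x | ∃ i, α i = 0 ∧ x = ra i} :=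
    ⟨0, Fin.elim0, Fin.elim0, fun j => j.elim0, fun j => j.elim0, by simp⟩
  rcases eq_or_lt_of_le (hα i) with hai | hai
  · -- α i = 0 : use the recession direction with scale 1/ε
    have hmem : f + ε⁻¹ • ra i ∈ inducedSet k₁ ra f α := by
      refine ⟨f, subset_convexHull ℝ _ (Or.inl rfl), ε⁻¹ • ra i, ?_, rfl⟩
      exact ⟨1, fun _ => ε⁻¹, fun _ => ra i, fun _ => inv_nonneg.mpr hε.le,
        fun _ => ⟨i, hai.symm, rfl⟩, by simp⟩
    obtain ⟨lam, hlam0, hlameq, hlamle⟩ := mem_inducedSet_rep rb f β hβ (hsub hmem)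
    have heq : ε⁻¹ • ra i = ∑ j, lam j • rb j := by
      have := hlameq
      rwa [add_right_inj] at this
    refine ⟨fun j => ε * lam j, fun j => mul_nonneg hε.le (hlam0 j), ?_, ?_⟩
    · have : ra i = ε • (ε⁻¹ • ra i) := by
        rw [smul_smul, mul_inv_cancel₀ hε.ne', one_smul]
      rw [this, heq, Finset.smul_sum]
      exact Finset.sum_congr rfl fun j _ => (smul_smul _ _ _)
    · have : ∑ j, β j * (ε * lam j) = ε * ∑ j, β j * lam j := by
        rw [Finset.mul_sum]; exact Finset.sum_congr rfl fun j _ => by ring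
      rw [this, ← hai]
      nlinarith
  · -- α i > 0
    have hmem : f + (α i)⁻¹ • ra i ∈ inducedSet k₁ ra f α := by
      refine ⟨f + (α i)⁻¹ • ra i, subset_convexHull ℝ _ (Or.inr ⟨i, hai, rfl⟩), 0,
        hzero, by simp⟩
    obtain ⟨lam, hlam0, hlameq, hlamle⟩ := mem_inducedSet_rep rb f β hβ (hsub hmem)
    have heq : (α i)⁻¹ • ra i = ∑ j, lam j • rb j := by
      have := hlameq
      rwa [add_right_inj] at this
    refine ⟨fun j => α i * lam j, fun j => mul_nonneg (hα i) (hlam0 j), ?_, ?_⟩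
    · have : ra i = α i • ((α i)⁻¹ • ra i) := by
        rw [smul_smul, mul_inv_cancel₀ hai.ne', one_smul]
      rw [this, heq, Finset.smul_sum]
      exact Finset.sum_congr rfl fun j _ => (smul_smul _ _ _)
    · have : ∑ j, β j * (α i * lam j) = α i * ∑ j, β j * lam j := by
        rw [Finset.mul_sum]; exact Finset.sum_congr rfl fun j _ => by ring
      rw [this]
      nlinarith

/-- The linear transfer map. -/
noncomputable def Tmap {k₁ k₂ : ℕ} (lam : Fin k₁ → Fin k₂ → ℝ) :
    (Pt × (Fin k₁ → ℝ)) →ₗ[ℝ] (Pt × (Fin k₂ → ℝ)) where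
  toFun p := (p.1, fun j => ∑ i, p.2 i * lam i j)
  map_add' p q := by
    ext j
    · simp
    · simp [add_mul, Finset.sum_add_distrib]
  map_smul' c p := by
    ext j
    · simp
    · simp [Finset.mul_sum, mul_assoc]

lemma Tmap_closures {k₁ k₂ : ℕ} (ra : Fin k₁ → Pt) (rb : Fin k₂ → Pt) (f : Pt)
    (lam : Fin k₁ → Fin k₂ → ℝ) (hlam0 : ∀ i j, 0 ≤ lam i j)
    (hrep : ∀ i, ra i = ∑ j, lam i j • rb j) :
    ∀ n, ∀ p ∈ closures k₁ ra f n, Tmap lam p ∈ closures k₂ rb f n := by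
  intro n
  induction n with
  | zero =>
    intro p hp
    obtain ⟨hs0, hx⟩ := hp
    constructor
    · intro j
      show 0 ≤ ∑ i, p.2 i * lam i j
      exact Finset.sum_nonneg fun i _ => mul_nonneg (hs0 i) (hlam0 i j)
    show p.1 = f + ∑ j, (∑ i, p.2 i * lam i j) • rb j
    rw [hx]
    congr 1
    calc ∑ i, p.2 i • ra i = ∑ i, ∑ j, (p.2 i * lam i j) • rb j := by
          refine Finset.sum_congr rfl fun i _ => ?_
          rw [hrep i, Finset.smul_sum]
          exact Finset.sum_congr rfl fun j _ => (smul_smul _ _ _)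
      _ = ∑ j, (∑ i, p.2 i * lam i j) • rb j := by
          rw [Finset.sum_comm]
          exact Finset.sum_congr rfl fun j _ => (Finset.sum_smul).symm
  | succ n ih =>
    intro p hp
    intro U hU
    simp only [Set.mem_range] at hU
    obtain ⟨π, rfl⟩ := hU
    intro V hV
    simp only [Set.mem_range] at hV
    obtain ⟨π₀, rfl⟩ := hV
    have hp' := hp
    rw [closures] at hp'
    have hpmem : p ∈ convexHull ℝ ((closures k₁ ra f n ∩ {q | ∑ j, (π j : ℝ) * q.1 j ≤ (π₀ : ℝ)}) ∪
        (closures k₁ ra f n ∩ {q | (π₀ : ℝ) + 1 ≤ ∑ j, (π j : ℝ) * q.1 j})) := by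
      exact Set.mem_iInter.mp (Set.mem_iInter.mp hp' π) π₀
    have himg : Tmap lam p ∈ convexHull ℝ ((Tmap lam) ''
        ((closures k₁ ra f n ∩ {q | ∑ j, (π j : ℝ) * q.1 j ≤ (π₀ : ℝ)}) ∪
        (closures k₁ ra f n ∩ {q | (π₀ : ℝ) + 1 ≤ ∑ j, (π j : ℝ) * q.1 j}))) := by
      rw [← LinearMap.image_convexHull]
      exact Set.mem_image_of_mem _ hpmem
    refine convexHull_mono ?_ himg
    rintro q ⟨q', hq'mem, rfl⟩
    rcases hq'mem with ⟨hq'c, hq's⟩ | ⟨hq'c, hq's⟩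
    · exact Or.inl ⟨ih q' hq'c, hq's⟩
    · exact Or.inr ⟨ih q' hq'c, hq's⟩

lemma closures_subset_relax {k : ℕ} (r : Fin k → Pt) (f : Pt) :
    ∀ n, closures k r f n ⊆ relaxP k r f := by
  intro n
  induction n with
  | zero => exact le_rfl
  | succ n ih =>
    intro p hp
    rw [closures] at hp
    have h0 : p ∈ convexHull ℝ ((closures k r f n ∩ {q | ∑ j, ((0 : Fin 2 → ℤ) j : ℝ) * q.1 j ≤ ((0:ℤ) : ℝ)}) ∪
        (closures k r f n ∩ {q | ((0:ℤ) : ℝ) + 1 ≤ ∑ j, ((0 : Fin 2 → ℤ) j : ℝ) * q.1 j})) :=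
      Set.mem_iInter.mp (Set.mem_iInter.mp hp 0) 0
    have hrelax : Convex ℝ (relaxP k r f) := by
      intro p hp q hq a b ha hb hab
      obtain ⟨hs0, hx⟩ := hp
      obtain ⟨ht0, hy⟩ := hq
      constructor
      · intro i
        show 0 ≤ a * p.2 i + b * q.2 i
        exact add_nonneg (mul_nonneg ha (hs0 i)) (mul_nonneg hb (ht0 i))
      · show a • p.1 + b • q.1 = f + ∑ i, (a * p.2 i + b * q.2 i) • r i
        rw [hx, hy]
        calc a • (f + ∑ i, p.2 i • r i) + b • (f + ∑ i, q.2 i • r i)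
            = (a + b) • f + ((∑ i, (a * p.2 i) • r i) + ∑ i, (b * q.2 i) • r i) := by
              simp_rw [smul_add, Finset.smul_sum, smul_smul, add_smul]; abel
          _ = f + ∑ i, (a * p.2 i + b * q.2 i) • r i := by
              rw [hab, one_smul]
              simp_rw [add_smul, Finset.sum_add_distrib]
    refine convexHull_min ?_ hrelax h0
    rintro q (⟨hq, _⟩ | ⟨hq, _⟩) <;> exact ih hq


theorem shape_lemma (k₁ k₂ : ℕ) (hk₁ : 1 ≤ k₁) (hk₂ : 1 ≤ k₂)
    (ra : Fin k₁ → Pt) (rb : Fin k₂ → Pt) (f : Pt)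
    (hra_rat : ∀ i, IsRatPt (ra i)) (hra_ne : ∀ i, ra i ≠ 0)
    (hrb_rat : ∀ i, IsRatPt (rb i)) (hrb_ne : ∀ i, rb i ≠ 0)
    (hf_rat : IsRatPt f) (hf_int : ¬ IsIntPt f)
    (hnea : (mixedP k₁ ra f).Nonempty) (hneb : (mixedP k₂ rb f).Nonempty)
    (α : Fin k₁ → ℝ) (hα : ∀ i, 0 ≤ α i) (hvalida : ValidIneq k₁ ra f α 1)
    (β : Fin k₂ → ℝ) (hβ : ∀ i, 0 ≤ β i) (hvalidb : ValidIneq k₂ rb f β 1)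
    (hcone : coneGen (Set.range rb) = Set.univ)
    (hsub : inducedSet k₁ ra f α ⊆ inducedSet k₂ rb f β) :
    splitRank k₁ ra f α 1 ≤ splitRank k₂ rb f β 1 := by
  apply sInf_le_sInf
  rintro j ⟨n, rfl, hvalid⟩
  refine ⟨n, rfl, ?_⟩
  intro p hp
  have hs0 : ∀ i, 0 ≤ p.2 i := (closures_subset_relax ra f n hp).1
  have key : ∀ ε : ℝ, 0 < ε → 1 ≤ (∑ i, α i * p.2 i) + ε * ∑ i, p.2 i := by
    intro ε hε
    choose lam hlam0 hlamrep hlamle using fun i => rayRep ra rb f α β hα hβ hsub i hε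
    have hT := Tmap_closures ra rb f lam hlam0 hlamrep n p hp
    have h1 := hvalid _ hT
    have e : ∑ j, β j * (Tmap lam p).2 j = ∑ i, p.2 i * ∑ j, β j * lam i j := by
      show ∑ j, β j * ∑ i, p.2 i * lam i j = _
      simp_rw [Finset.mul_sum]
      rw [Finset.sum_comm]
      exact Finset.sum_congr rfl fun i _ => Finset.sum_congr rfl fun j _ => by ring
    rw [e] at h1
    have h2 : ∑ i, p.2 i * ∑ j, β j * lam i j ≤ ∑ i, p.2 i * (α i + ε) :=
      Finset.sum_le_sum fun i _ => mul_le_mul_of_nonneg_left (hlamle i) (hs0 i)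
    have e2 : ∑ i, p.2 i * (α i + ε) = (∑ i, α i * p.2 i) + ε * ∑ i, p.2 i := by
      simp_rw [mul_add]
      rw [Finset.sum_add_distrib, Finset.mul_sum]
      congr 1
      · exact Finset.sum_congr rfl fun i _ => by ring
      · exact Finset.sum_congr rfl fun i _ => by ring
    linarith
  by_contra hcon
  push_neg at hcon
  set A := ∑ i, α i * p.2 i with hA
  set B := ∑ i, p.2 i with hB
  have hB0 : 0 ≤ B := Finset.sum_nonneg fun i _ => hs0 i
  have hε : 0 < (1 - A) / (2 * (B + 1)) := by
    apply div_pos <;> linarith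
  have h := key _ hε
  have hεB1 : ((1 - A) / (2 * (B + 1))) * (B + 1) = (1 - A) / 2 := by
    field_simp
  nlinarith [hε.le]
end

section
/- (Projection.) Let r^{k+1} ∈ ℚ² ∖ {0} and let ∑_{i=1}^{k+1} αᵢ sᵢ ≥ γ with α ∈ ℝ^{k+1}, α ≥ 0, be a valid inequality for conv(P([R r^{k+1}],f)) of split rank η with respect to P([R r^{k+1}],f)⁰. Then ∑_{i=1}^{k} αᵢ sᵢ ≥ γ is a valid inequality for conv(P(R,f)) and has split rank at most η with respect to P(R,f)⁰. -/
open Set Pointwise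

/-- The linear map appending a zero coordinate. -/
def snocZeroLM (k : ℕ) : (Fin k → ℝ) →ₗ[ℝ] (Fin (k + 1) → ℝ) where
  toFun s := Fin.snoc s 0
  map_add' s t := by
    funext i
    refine Fin.lastCases ?_ ?_ i <;> simp
  map_smul' c s := by
    funext i
    refine Fin.lastCases ?_ ?_ i <;> simp

/-- Embedding of the small space into the big space. -/
def embLM (k : ℕ) : (Pt × (Fin k → ℝ)) →ₗ[ℝ] (Pt × (Fin (k + 1) → ℝ)) :=
  (LinearMap.id : Pt →ₗ[ℝ] Pt).prodMap (snocZeroLM k)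

lemma emb_fst (k : ℕ) (p : Pt × (Fin k → ℝ)) : (embLM k p).1 = p.1 := rfl

lemma emb_snd (k : ℕ) (p : Pt × (Fin k → ℝ)) : (embLM k p).2 = Fin.snoc p.2 0 := rfl

lemma sum_mul_snoc (k : ℕ) (a : Fin (k + 1) → ℝ) (s : Fin k → ℝ) :
    ∑ i, a i * (Fin.snoc s 0 : Fin (k+1) → ℝ) i = ∑ i : Fin k, a i.castSucc * s i := by
  rw [Fin.sum_univ_castSucc]
  simp

lemma sum_smul_snoc (k : ℕ) (r : Fin k → Pt) (rnew : Pt) (s : Fin k → ℝ) :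
    ∑ i, (Fin.snoc s 0 : Fin (k+1) → ℝ) i • (Fin.snoc r rnew : Fin (k+1) → Pt) i = ∑ i : Fin k, s i • r i := by
  rw [Fin.sum_univ_castSucc]
  simp

lemma emb_closures (k : ℕ) (r : Fin k → Pt) (f : Pt) (rnew : Pt) :
    ∀ n, ∀ p ∈ closures k r f n,
      embLM k p ∈ closures (k + 1) (Fin.snoc r rnew) f n := by
  intro n
  induction n with
  | zero =>
    intro p hp
    obtain ⟨hpos, heq⟩ := hp
    refine ⟨?_, ?_⟩
    · intro i
      refine Fin.lastCases ?_ ?_ i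
      · simp [emb_snd]
      · intro j; simpa [emb_snd] using hpos j
    · rw [emb_fst, emb_snd, sum_smul_snoc]
      exact heq
  | succ n ih =>
    intro p hp
    simp only [closures, splitClosure, Set.mem_iInter] at hp ⊢
    intro π π₀
    have hp' := hp π π₀
    have himg := Set.mem_image_of_mem (embLM k) hp'
    rw [LinearMap.image_convexHull] at himg
    refine convexHull_mono ?_ himg
    rintro q ⟨p', hp', rfl⟩
    rcases hp' with ⟨hC, hside⟩ | ⟨hC, hside⟩
    · left
      exact ⟨ih p' hC, by simpa [emb_fst] using hside⟩
    · right
      exact ⟨ih p' hC, by simpa [emb_fst] using hside⟩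

theorem projection (k : ℕ)
    (hk : 1 ≤ k)
    (r : Fin k → Pt) (f : Pt)
    (hr_rat : ∀ i, IsRatPt (r i)) (hr_ne : ∀ i, r i ≠ 0)
    (hf_rat : IsRatPt f) (hf_int : ¬ IsIntPt f)
    (hne : (mixedP k r f).Nonempty)
    (rnew : Pt) (hrnew_rat : IsRatPt rnew) (hrnew_ne : rnew ≠ 0)
    (α : Fin (k + 1) → ℝ) (hα : ∀ i, 0 ≤ α i) (γ : ℝ)
    (hvalid : ValidIneq (k + 1) (Fin.snoc r rnew) f α γ)
    (η : ℕ∞) (hη : splitRank (k + 1) (Fin.snoc r rnew) f α γ = η) :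
    ValidIneq k r f (fun i => α i.castSucc) γ ∧
    splitRank k r f (fun i => α i.castSucc) γ ≤ η := by
  constructor
  · intro p hp
    obtain ⟨hint, hpos, heq⟩ := hp
    have hmem : embLM k p ∈ mixedP (k + 1) (Fin.snoc r rnew) f := by
      refine ⟨by simpa [emb_fst] using hint, ?_, ?_⟩
      · intro i
        refine Fin.lastCases ?_ ?_ i
        · simp [emb_snd]
        · intro j; simpa [emb_snd] using hpos j
      · rw [emb_fst, emb_snd, sum_smul_snoc]
        exact heq
    have := hvalid _ hmem
    rwa [emb_snd, sum_mul_snoc] at this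
  · rw [← hη]
    apply sInf_le_sInf
    rintro j ⟨n, rfl, hval⟩
    refine ⟨n, rfl, ?_⟩
    intro p hp
    have := hval _ (emb_closures k r f rnew n p hp)
    rwa [emb_snd, sum_mul_snoc] at this
end

section
/- Let k = 3 and suppose the cone generated by {r¹, r², r³} equals ℝ². Let α ∈ ℝ³ with α ≥ 0, let β ∈ ℝ³ with βᵢ > 0 for i = 1,2,3, and set L_β := conv{f + r¹/β₁, f + r²/β₂, f + r³/β₃}. Fix π ∈ ℤ² ∖ {0} and π₀ ∈ ℤ, and define Q := {(x,s) ∈ ℝ² × ℝ³ : s ≥ 0, x = f + Rs, α₁s₁ + α₂s₂ + α₃s₃ ≥ 1}, Q^≤ := Q ∩ {(x,s) : π·x ≤ π₀}, and Q^≥ := Q ∩ {(x,s) : π·x ≥ π₀ + 1}. If every extreme point (x̄, s̄) of Q^≤ and every extreme point (x̄, s̄) of Q^≥ satisfies x̄ ∉ int(L_β), then β₁s₁ + β₂s₂ + β₃s₃ ≥ 1 holds at every point of conv(Q^≤ ∪ Q^≥). -/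
open Set Pointwise

/-- Extract a 3-coefficient nonnegative representation from `coneGen` membership. -/
lemma coneGen_extract3 (r : Fin 3 → Pt) (hcone : coneGen (Set.range r) = Set.univ) (x : Pt) :
    ∃ b : Fin 3 → ℝ, (∀ i, 0 ≤ b i) ∧ x = ∑ i, b i • r i := by
  have hx : x ∈ coneGen (Set.range r) := by rw [hcone]; trivial
  obtain ⟨n, c, v, hc, hv, hxeq⟩ := hx
  choose idx hidx using hv
  refine ⟨fun i => ∑ j, if idx j = i then c j else 0, fun i => Finset.sum_nonneg fun j _ => ?_, ?_⟩
  · by_cases h : idx j = i <;> simp [h, hc j]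
  · have hkey : ∑ i, (∑ j, if idx j = i then c j else 0) • r i = ∑ j, c j • v j := by
      simp_rw [Finset.sum_smul, ite_smul, zero_smul]
      rw [Finset.sum_comm]
      refine Finset.sum_congr rfl fun j _ => ?_
      rw [Finset.sum_ite_eq]
      simp [hidx j]
    rw [hkey]; exact hxeq

/-- Membership in `Lβ` for points `f + ∑ cᵢ rᵢ` with `∑ βᵢ cᵢ ≤ 1`, given `f ∈ Lβ`. -/
lemma mem_Lbeta (r : Fin 3 → Pt) (f : Pt) (β : Fin 3 → ℝ) (hβ : ∀ i, 0 < β i)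
    (hf : f ∈ convexHull ℝ (Set.range fun i => f + (β i)⁻¹ • r i))
    (c : Fin 3 → ℝ) (hc : ∀ i, 0 ≤ c i) (hsum : ∑ i, β i * c i ≤ 1) :
    f + ∑ i, c i • r i ∈ convexHull ℝ (Set.range fun i => f + (β i)⁻¹ • r i) := by
  set T := ∑ i, β i * c i with hT
  have hmain := (convex_convexHull ℝ (Set.range fun i => f + (β i)⁻¹ • r i)).sum_mem
    (t := Finset.univ) (w := Fin.cons (1 - T) (fun i => β i * c i))
    (z := Fin.cons f (fun i => f + (β i)⁻¹ • r i)) ?_ ?_ ?_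
  · have hkey : ∑ j : Fin (3+1), (Fin.cons (1 - T) (fun i => β i * c i) : Fin (3+1) → ℝ) j •
        (Fin.cons f (fun i => f + (β i)⁻¹ • r i) : Fin (3+1) → Pt) j
        = f + ∑ i, c i • r i := by
      rw [Fin.sum_univ_succ]
      have e1 : ∀ i : Fin 3, (β i * c i) • (f + (β i)⁻¹ • r i)
          = (β i * c i) • f + c i • r i := by
        intro i
        have hb : β i ≠ 0 := (hβ i).ne'
        rw [smul_add, smul_smul]
        congr 2
        field_simp
      simp only [Fin.cons_succ, Fin.cons_zero, e1, Finset.sum_add_distrib, ← Finset.sum_smul, ← hT]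
      rw [← add_assoc, ← add_smul]
      simp
    rw [hkey] at hmain
    exact hmain
  · intro j _
    refine Fin.cases ?_ ?_ j
    · simpa using hsum
    · intro i; simpa using mul_nonneg (hβ i).le (hc i)
  · rw [Fin.sum_cons]; ring
  · intro j _
    refine Fin.cases ?_ ?_ j
    · simpa using hf
    · intro i
      simpa using subset_convexHull ℝ (Set.range fun i' => f + (β i')⁻¹ • r i') (Set.mem_range_self i)

/-- `f` itself lies in `Lβ` when the rays positively span the plane. -/
lemma f_mem_Lbeta (r : Fin 3 → Pt) (f : Pt) (β : Fin 3 → ℝ) (hβ : ∀ i, 0 < β i)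
    (hcone : coneGen (Set.range r) = Set.univ) :
    f ∈ convexHull ℝ (Set.range fun i => f + (β i)⁻¹ • r i) := by
  obtain ⟨b, hb, hbe⟩ := coneGen_extract3 r hcone (-(∑ i, (β i)⁻¹ • r i))
  set ν : Fin 3 → ℝ := fun i => b i + (β i)⁻¹ with hν
  have hν0 : ∀ i, 0 < ν i := fun i => add_pos_of_nonneg_of_pos (hb i) (inv_pos.2 (hβ i))
  have hνr : ∑ i, ν i • r i = 0 := by
    simp only [hν, add_smul, Finset.sum_add_distrib, ← hbe]
    abel
  set N := ∑ i, ν i * β i with hN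
  have hNpos : 0 < N := Finset.sum_pos (fun i _ => mul_pos (hν0 i) (hβ i)) ⟨0, Finset.mem_univ 0⟩
  have hmain := (convex_convexHull ℝ (Set.range fun i => f + (β i)⁻¹ • r i)).sum_mem
    (t := Finset.univ) (w := fun i => ν i * β i / N)
    (z := fun i => f + (β i)⁻¹ • r i)
    (fun i _ => div_nonneg (mul_nonneg (hν0 i).le (hβ i).le) hNpos.le)
    (by rw [← Finset.sum_div, ← hN]; field_simp)
    (fun i _ => subset_convexHull ℝ _ ⟨i, rfl⟩)
  have hkey : ∑ i, (ν i * β i / N) • (f + (β i)⁻¹ • r i) = f := by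
    have e1 : ∀ i, (ν i * β i / N) • (f + (β i)⁻¹ • r i)
        = (ν i * β i / N) • f + N⁻¹ • (ν i • r i) := by
      intro i
      have hb : β i ≠ 0 := (hβ i).ne'
      have hn : N ≠ 0 := hNpos.ne'
      rw [smul_add, smul_smul, smul_smul]
      congr 2
      field_simp
    simp only [e1, Finset.sum_add_distrib, ← Finset.sum_smul, ← Finset.smul_sum, hνr, smul_zero,
      add_zero]
    rw [← Finset.sum_div, ← hN]
    have : N / N = 1 := div_self hNpos.ne'
    rw [this, one_smul]
  rw [hkey] at hmain
  exact hmain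

/-- Key analytic fact: a point `f + ∑ sᵢ rᵢ` with `s ≥ 0` and `∑ βᵢ sᵢ < 1` lies in the
interior of `Lβ`. -/
lemma key_interior (r : Fin 3 → Pt) (f : Pt) (β : Fin 3 → ℝ) (hβ : ∀ i, 0 < β i)
    (hcone : coneGen (Set.range r) = Set.univ)
    (s : Fin 3 → ℝ) (hs : ∀ i, 0 ≤ s i) (hlt : ∑ i, β i * s i < 1) :
    f + ∑ i, s i • r i ∈ interior (convexHull ℝ (Set.range fun i => f + (β i)⁻¹ • r i)) := by
  have hf := f_mem_Lbeta r f β hβ hcone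
  choose ap hap0 hape using fun j : Fin 2 => coneGen_extract3 r hcone (Pi.single j 1)
  choose am ham0 hame using fun j : Fin 2 => coneGen_extract3 r hcone (-(Pi.single j 1))
  set M : ℝ := (∑ j : Fin 2, ∑ i, (β i * ap j i + β i * am j i)) + 1 with hM
  have hM1 : 1 ≤ M := by
    have : (0:ℝ) ≤ ∑ j : Fin 2, ∑ i, (β i * ap j i + β i * am j i) :=
      Finset.sum_nonneg fun j _ => Finset.sum_nonneg fun i _ =>
        add_nonneg (mul_nonneg (hβ i).le (hap0 j i)) (mul_nonneg (hβ i).le (ham0 j i))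
    linarith
  have hMpos : (0:ℝ) < M := lt_of_lt_of_le one_pos hM1
  set T := ∑ i, β i * s i with hT
  have hε : (0:ℝ) < (1 - T) / M := div_pos (by linarith) hMpos
  rw [mem_interior]
  refine ⟨Metric.ball (f + ∑ i, s i • r i) ((1 - T) / M), ?_, Metric.isOpen_ball,
    Metric.mem_ball_self hε⟩
  intro z hz
  set y := z - (f + ∑ i, s i • r i) with hy
  have hynorm : ‖y‖ < (1 - T) / M := by
    rw [hy]
    simpa [dist_eq_norm] using hz
  set A : Fin 3 → ℝ := fun i => ∑ j : Fin 2, (max (y j) 0 * ap j i + max (-(y j)) 0 * am j i)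
    with hA
  have hA0 : ∀ i, 0 ≤ A i := fun i => Finset.sum_nonneg fun j _ =>
    add_nonneg (mul_nonneg (le_max_right _ _) (hap0 j i))
      (mul_nonneg (le_max_right _ _) (ham0 j i))
  have hAy : ∑ i, A i • r i = y := by
    have step : ∀ j : Fin 2, (max (y j) 0) • (Pi.single j (1:ℝ) : Pt)
        + (max (-(y j)) 0) • (-(Pi.single j (1:ℝ) : Pt)) = Pi.single j (y j) := by
      intro j
      rw [smul_neg, ← sub_eq_add_neg, ← sub_smul, max_zero_sub_max_neg_zero_eq_self,
        ← Pi.single_smul, smul_eq_mul, mul_one]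
    calc ∑ i, A i • r i
        = ∑ j : Fin 2, ((max (y j) 0) • (∑ i, ap j i • r i)
            + (max (-(y j)) 0) • (∑ i, am j i • r i)) := by
          simp only [hA, Finset.sum_smul, add_smul, mul_smul]
          rw [Finset.sum_comm]
          simp [Finset.smul_sum, Finset.sum_add_distrib]
      _ = ∑ j : Fin 2, Pi.single j (y j) := by
          refine Finset.sum_congr rfl fun j _ => ?_
          rw [← hape j, ← hame j]
          exact step j
      _ = y := Finset.univ_sum_single y
  have hyj : ∀ j : Fin 2, max (y j) 0 ≤ ‖y‖ ∧ max (-(y j)) 0 ≤ ‖y‖ := by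
    intro j
    have h1 : |y j| ≤ ‖y‖ := by
      rw [← Real.norm_eq_abs]; exact norm_le_pi_norm y j
    exact ⟨max_le ((le_abs_self _).trans h1) (norm_nonneg y),
      max_le ((neg_le_abs _).trans h1) (norm_nonneg y)⟩
  have hAb : ∑ i, β i * A i ≤ ‖y‖ * M := by
    calc ∑ i, β i * A i
        = ∑ j : Fin 2, ∑ i, (max (y j) 0 * (β i * ap j i) + max (-(y j)) 0 * (β i * am j i)) := by
          simp only [hA, Finset.mul_sum]
          rw [Finset.sum_comm]
          exact Finset.sum_congr rfl fun j _ => Finset.sum_congr rfl fun i _ => by ring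
      _ ≤ ∑ j : Fin 2, ∑ i, (‖y‖ * (β i * ap j i) + ‖y‖ * (β i * am j i)) := by
          refine Finset.sum_le_sum fun j _ => Finset.sum_le_sum fun i _ => ?_
          have h1 : 0 ≤ β i * ap j i := mul_nonneg (hβ i).le (hap0 j i)
          have h2 : 0 ≤ β i * am j i := mul_nonneg (hβ i).le (ham0 j i)
          have h3 := (hyj j).1
          have h4 := (hyj j).2
          nlinarith
      _ = ‖y‖ * (∑ j : Fin 2, ∑ i, (β i * ap j i + β i * am j i)) := by
          simp only [Finset.mul_sum]
          exact Finset.sum_congr rfl fun j _ => Finset.sum_congr rfl fun i _ => by ring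
      _ ≤ ‖y‖ * M := by
          refine mul_le_mul_of_nonneg_left ?_ (norm_nonneg y)
          rw [hM]; linarith
  have hsumA : ∑ i, β i * (s i + A i) ≤ 1 := by
    have e1 : ∑ i, β i * (s i + A i) = T + ∑ i, β i * A i := by
      rw [hT, ← Finset.sum_add_distrib]
      exact Finset.sum_congr rfl fun i _ => by ring
    have e2 : ‖y‖ * M < ((1 - T) / M) * M := mul_lt_mul_of_pos_right hynorm hMpos
    have e3 : ((1 - T) / M) * M = 1 - T := div_mul_cancel₀ _ hMpos.ne'
    nlinarith [hAb, e1, e2, e3]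
  have hz' : z = f + ∑ i, (s i + A i) • r i := by
    have : z = f + ∑ i, s i • r i + y := by rw [hy]; abel
    rw [this, ← hAy]
    simp only [add_smul, Finset.sum_add_distrib]
    abel
  rw [hz']
  exact mem_Lbeta r f β hβ hf _ (fun i => add_nonneg (hs i) (hA0 i)) hsumA

/-- Validity of the `β`-inequality on a closed subset of the relaxation whose extreme
points avoid the interior of `Lβ`. -/
lemma valid_on_closed (r : Fin 3 → Pt) (f : Pt) (β : Fin 3 → ℝ) (hβ : ∀ i, 0 < β i)
    (hcone : coneGen (Set.range r) = Set.univ)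
    (S : Set (Pt × (Fin 3 → ℝ))) (hScl : IsClosed S)
    (hSsub : ∀ p ∈ S, (∀ i, 0 ≤ p.2 i) ∧ p.1 = f + ∑ i, p.2 i • r i)
    (hSext : ∀ p ∈ Set.extremePoints ℝ S,
      p.1 ∉ interior (convexHull ℝ (Set.range fun i => f + (β i)⁻¹ • r i))) :
    ∀ p ∈ S, 1 ≤ ∑ i, β i * p.2 i := by
  by_contra h
  push_neg at h
  obtain ⟨p₀, hp₀S, hp₀⟩ := h
  set B : Pt × (Fin 3 → ℝ) → ℝ := fun p => ∑ i, β i * p.2 i with hB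
  set t₀ := B p₀ with ht₀
  set K := S ∩ {p | B p ≤ t₀} with hK
  have hp₀K : p₀ ∈ K := ⟨hp₀S, show B p₀ ≤ t₀ from ht₀.ge⟩
  have hBcont : Continuous B :=
    continuous_finset_sum _ fun i _ => continuous_const.mul ((continuous_apply i).comp
      continuous_snd)
  have hKcl : IsClosed K := hScl.inter (isClosed_le hBcont continuous_const)
  have hKcomp : IsCompact K := by
    have hbox : IsCompact ((fun s : Fin 3 → ℝ =>
        ((f + ∑ i, s i • r i, s) : Pt × (Fin 3 → ℝ))) ''
          (Set.univ.pi fun i => Set.Icc 0 (t₀ / β i))) := by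
      refine IsCompact.image (isCompact_univ_pi fun i => isCompact_Icc) ?_
      exact (continuous_const.add (continuous_finset_sum _ fun i _ =>
        (continuous_apply i).smul continuous_const)).prodMk continuous_id
    refine hbox.of_isClosed_subset hKcl ?_
    rintro p ⟨hpS, hpB⟩
    obtain ⟨hpos, heq⟩ := hSsub p hpS
    refine ⟨p.2, fun i _ => ⟨hpos i, ?_⟩, ?_⟩
    · rw [le_div_iff₀ (hβ i)]
      calc p.2 i * β i = β i * p.2 i := mul_comm _ _
        _ ≤ ∑ i', β i' * p.2 i' :=
            Finset.single_le_sum (f := fun i' => β i' * p.2 i')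
              (fun i' _ => mul_nonneg (hβ i').le (hpos i')) (Finset.mem_univ i)
        _ ≤ t₀ := hpB
    · exact Prod.ext heq.symm rfl
  obtain ⟨p₁, hp₁K, hp₁min⟩ := hKcomp.exists_isMinOn ⟨p₀, hp₀K⟩ hBcont.continuousOn
  set m := B p₁ with hm
  have hmt₀ : m ≤ t₀ := hp₁min hp₀K
  have hmlt1 : m < 1 := lt_of_le_of_lt hmt₀ hp₀
  have hglobal : ∀ q ∈ S, m ≤ B q := by
    intro q hq
    by_cases hq' : B q ≤ t₀
    · exact hp₁min ⟨hq, hq'⟩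
    · push_neg at hq'; linarith
  set F := {p ∈ S | B p = m} with hF
  have hFext : IsExtreme ℝ S F := by
    constructor
    · exact fun p hp => hp.1
    · rintro x₁ hx₁ x₂ hx₂ p hpF ⟨a, b, ha, hb, hab, hcomb⟩
      have hBlin : a * B x₁ + b * B x₂ = m := by
        have : B (a • x₁ + b • x₂) = a * B x₁ + b * B x₂ := by
          simp only [hB, Finset.mul_sum, ← Finset.sum_add_distrib]
          refine Finset.sum_congr rfl fun i _ => ?_
          simp only [Prod.snd_add, Prod.smul_snd, Pi.add_apply, Pi.smul_apply, smul_eq_mul]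
          ring
        rw [hcomb] at this
        rw [← this, hpF.2]
      have h1 := hglobal x₁ hx₁
      have h2 := hglobal x₂ hx₂
      have e : a * (B x₁ - m) + b * (B x₂ - m) = 0 := by linear_combination hBlin - m * hab
      have e1 : 0 ≤ a * (B x₁ - m) := mul_nonneg ha.le (by linarith)
      have e2 : 0 ≤ b * (B x₂ - m) := mul_nonneg hb.le (by linarith)
      have hx1m : B x₁ = m := by nlinarith
      have hx2m : B x₂ = m := by nlinarith
      exact ⟨hx₁, hx1m⟩
  have hFcl : IsClosed F := hScl.inter (isClosed_eq hBcont continuous_const)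
  have hFcomp : IsCompact F :=
    hKcomp.of_isClosed_subset hFcl (fun p hp => ⟨hp.1, hp.2.le.trans hmt₀⟩)
  obtain ⟨p₂, hp₂⟩ := hFcomp.extremePoints_nonempty ⟨p₁, hp₁K.1, rfl⟩
  have hp₂S : p₂ ∈ Set.extremePoints ℝ S := hFext.extremePoints_subset_extremePoints hp₂
  have hp₂F : p₂ ∈ F := hp₂.1
  obtain ⟨hpos, heq⟩ := hSsub p₂ hp₂F.1
  have hint : p₂.1 ∈ interior (convexHull ℝ (Set.range fun i => f + (β i)⁻¹ • r i)) := by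
    rw [heq]
    refine key_interior r f β hβ hcone p₂.2 hpos ?_
    have : B p₂ = m := hp₂F.2
    rw [hB] at this
    simp only at this
    linarith [this ▸ hmlt1]
  exact hSext p₂ hp₂S hint

theorem three_var_disjunction_validity
    (r : Fin 3 → Pt) (f : Pt)
    (hr_rat : ∀ i, IsRatPt (r i)) (hr_ne : ∀ i, r i ≠ 0)
    (hf_rat : IsRatPt f) (hf_int : ¬ IsIntPt f)
    (hcone : coneGen (Set.range r) = Set.univ)
    (α : Fin 3 → ℝ) (hα : ∀ i, 0 ≤ α i)
    (β : Fin 3 → ℝ) (hβ : ∀ i, 0 < β i)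
    (Lβ : Set Pt)
    (hLβ : Lβ = convexHull ℝ (Set.range fun i => f + (β i)⁻¹ • r i))
    (π : Fin 2 → ℤ) (hπ : π ≠ 0) (π₀ : ℤ)
    (Q Qle Qge : Set (Pt × (Fin 3 → ℝ)))
    (hQ : Q = {p | (∀ i, 0 ≤ p.2 i) ∧ p.1 = f + ∑ i, p.2 i • r i ∧
      1 ≤ ∑ i, α i * p.2 i})
    (hQle : Qle = Q ∩ {p | ∑ j, (π j : ℝ) * p.1 j ≤ (π₀ : ℝ)})
    (hQge : Qge = Q ∩ {p | (π₀ : ℝ) + 1 ≤ ∑ j, (π j : ℝ) * p.1 j})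
    (hext : ∀ p : Pt × (Fin 3 → ℝ),
      (p ∈ Set.extremePoints ℝ Qle ∨ p ∈ Set.extremePoints ℝ Qge) →
      p.1 ∉ interior Lβ) :
    ∀ p ∈ convexHull ℝ (Qle ∪ Qge), 1 ≤ ∑ i, β i * p.2 i := by
  have hcoord : ∀ i : Fin 3, Continuous fun p : Pt × (Fin 3 → ℝ) => p.2 i :=
    fun i => (continuous_apply i).comp continuous_snd
  have hx : ∀ j : Fin 2, Continuous fun p : Pt × (Fin 3 → ℝ) => p.1 j :=
    fun j => (continuous_apply j).comp continuous_fst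
  have hclQ : IsClosed Q := by
    rw [hQ]
    have e : {p : Pt × (Fin 3 → ℝ) | (∀ i, 0 ≤ p.2 i) ∧ p.1 = f + ∑ i, p.2 i • r i ∧
        1 ≤ ∑ i, α i * p.2 i}
        = (⋂ i, {p : Pt × (Fin 3 → ℝ) | 0 ≤ p.2 i}) ∩
          ({p : Pt × (Fin 3 → ℝ) | p.1 = f + ∑ i, p.2 i • r i} ∩
           {p : Pt × (Fin 3 → ℝ) | 1 ≤ ∑ i, α i * p.2 i}) := by
      ext p
      constructor
      · rintro ⟨h1, h2, h3⟩
        exact ⟨Set.mem_iInter.2 h1, h2, h3⟩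
      · rintro ⟨h1, h2, h3⟩
        exact ⟨Set.mem_iInter.1 h1, h2, h3⟩
    rw [e]
    refine IsClosed.inter (isClosed_iInter fun i => isClosed_le continuous_const (hcoord i))
      (IsClosed.inter ?_ ?_)
    · exact isClosed_eq continuous_fst (continuous_const.add
        (continuous_finset_sum _ fun i _ => (hcoord i).smul continuous_const))
    · exact isClosed_le continuous_const
        (continuous_finset_sum _ fun i _ => continuous_const.mul (hcoord i))
  have hclle : IsClosed Qle := by
    rw [hQle]
    exact hclQ.inter (isClosed_le
      (continuous_finset_sum _ fun j _ => continuous_const.mul (hx j)) continuous_const)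
  have hclge : IsClosed Qge := by
    rw [hQge]
    exact hclQ.inter (isClosed_le continuous_const
      (continuous_finset_sum _ fun j _ => continuous_const.mul (hx j)))
  have hsuble : ∀ p ∈ Qle, (∀ i, 0 ≤ p.2 i) ∧ p.1 = f + ∑ i, p.2 i • r i := by
    intro p hp
    rw [hQle, hQ] at hp
    exact ⟨hp.1.1, hp.1.2.1⟩
  have hsubge : ∀ p ∈ Qge, (∀ i, 0 ≤ p.2 i) ∧ p.1 = f + ∑ i, p.2 i • r i := by
    intro p hp
    rw [hQge, hQ] at hp
    exact ⟨hp.1.1, hp.1.2.1⟩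
  have hvalle : ∀ p ∈ Qle, 1 ≤ ∑ i, β i * p.2 i := by
    refine valid_on_closed r f β hβ hcone Qle hclle hsuble ?_
    intro p hp
    rw [← hLβ]
    exact hext p (Or.inl hp)
  have hvalge : ∀ p ∈ Qge, 1 ≤ ∑ i, β i * p.2 i := by
    refine valid_on_closed r f β hβ hcone Qge hclge hsubge ?_
    intro p hp
    rw [← hLβ]
    exact hext p (Or.inr hp)
  have hconv : Convex ℝ {p : Pt × (Fin 3 → ℝ) | 1 ≤ ∑ i, β i * p.2 i} := by
    intro u hu v hv a b ha hb hab
    simp only [Set.mem_setOf_eq] at hu hv ⊢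
    have e : ∑ i, β i * (a • u + b • v).2 i
        = a * ∑ i, β i * u.2 i + b * ∑ i, β i * v.2 i := by
      simp only [Finset.mul_sum, ← Finset.sum_add_distrib]
      refine Finset.sum_congr rfl fun i _ => ?_
      simp only [Prod.snd_add, Prod.smul_snd, Pi.add_apply, Pi.smul_apply, smul_eq_mul]
      ring
    rw [e]
    have h1 : a * 1 ≤ a * ∑ i, β i * u.2 i := mul_le_mul_of_nonneg_left hu ha
    have h2 : b * 1 ≤ b * ∑ i, β i * v.2 i := mul_le_mul_of_nonneg_left hv hb
    linarith
  intro p hp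
  have := convexHull_min (Set.union_subset (fun q hq => hvalle q hq) (fun q hq => hvalge q hq))
    hconv hp
  exact this
end

section
/- Let a, e ∈ ℝ with a > 1 and e > 1, and set C := min{1, (1 − 1/a)·e}. Let (cₙ)_{n≥0} be the real sequence defined by any c₀ with 0 < c₀ < 1 and c₀ < (1 − 1/a)·e, and the recursion cₙ₊₁ := (a − 1)/(a − (e − 1)/(e − cₙ)). Then the recursion is well-defined (for every n, e − cₙ > 0 and a − (e−1)/(e−cₙ) > 0), the sequence (cₙ) is non-decreasing, cₙ ≤ 1 and cₙ ≤ (1 − 1/a)·e for all n, and cₙ converges to C as n → ∞. -/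
private lemma aux_key (a e : ℝ) (ha : 1 < a) (he : 1 < e) (x : ℝ) (hx0 : 0 < x)
    (hx1 : x ≤ 1) (hxM : x ≤ (1 - 1/a) * e) :
    0 < e - x ∧ 0 < a - (e-1)/(e-x) ∧ 0 < (a-1)/(a-(e-1)/(e-x)) ∧
    (a-1)/(a-(e-1)/(e-x)) ≤ 1 ∧ (a-1)/(a-(e-1)/(e-x)) ≤ (1-1/a)*e ∧
    x ≤ (a-1)/(a-(e-1)/(e-x)) := by
  have ha0 : (0:ℝ) < a := by linarith
  have hex : 0 < e - x := by linarith
  have haxe : a * x ≤ (a-1)*e := by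
    have := mul_le_mul_of_nonneg_left hxM (le_of_lt ha0)
    have h2 : a * ((1 - 1/a) * e) = (a-1)*e := by field_simp
    linarith [h2 ▸ this]
  have hD : 0 < a*(e-x) - (e-1) := by nlinarith
  have hd : 0 < a - (e-1)/(e-x) := by
    rw [sub_pos, div_lt_iff₀ hex]; nlinarith
  have hfx : (a-1)/(a-(e-1)/(e-x)) = ((a-1)*(e-x))/(a*(e-x)-(e-1)) := by
    rw [div_eq_div_iff (ne_of_gt hd) (ne_of_gt hD)]
    field_simp
  refine ⟨hex, hd, ?_, ?_, ?_, ?_⟩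
  · rw [hfx]; exact div_pos (by nlinarith) hD
  · rw [hfx, div_le_one hD]; nlinarith
  · rw [hfx, div_le_iff₀ hD]
    have hM : (1 - 1/a) * e = (a-1)*e/a := by field_simp
    rw [hM, div_mul_eq_mul_div, le_div_iff₀ ha0]
    nlinarith [mul_nonneg (mul_nonneg (by linarith : (0:ℝ) ≤ a - 1)
      (by linarith : (0:ℝ) ≤ e - 1)) (by nlinarith : (0:ℝ) ≤ a*(e-x) - e)]
  · rw [hfx, le_div_iff₀ hD]
    nlinarith [mul_nonneg (by linarith : (0:ℝ) ≤ 1 - x)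
      (by linarith : (0:ℝ) ≤ (a-1)*e - a*x)]

theorem recursion_converges (a e : ℝ) (ha : 1 < a) (he : 1 < e)
    (c : ℕ → ℝ)
    (hc0_pos : 0 < c 0) (hc0_lt1 : c 0 < 1) (hc0_lt : c 0 < (1 - 1 / a) * e)
    (hrec : ∀ n, c (n + 1) = (a - 1) / (a - (e - 1) / (e - c n))) :
    (∀ n, 0 < e - c n ∧ 0 < a - (e - 1) / (e - c n)) ∧
    Monotone c ∧
    (∀ n, c n ≤ 1 ∧ c n ≤ (1 - 1 / a) * e) ∧
    Filter.Tendsto c Filter.atTop (nhds (min 1 ((1 - 1 / a) * e))) := by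
  have ha0 : (0:ℝ) < a := by linarith
  -- invariant
  have inv : ∀ n, 0 < c n ∧ c n ≤ 1 ∧ c n ≤ (1 - 1/a) * e := by
    intro n
    induction n with
    | zero => exact ⟨hc0_pos, le_of_lt hc0_lt1, le_of_lt hc0_lt⟩
    | succ k ih =>
      obtain ⟨h0, h1, hM⟩ := ih
      obtain ⟨_, _, p0, p1, pM, _⟩ := aux_key a e ha he (c k) h0 h1 hM
      rw [hrec k]
      exact ⟨p0, p1, pM⟩
  have denoms : ∀ n, 0 < e - c n ∧ 0 < a - (e - 1) / (e - c n) := by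
    intro n
    obtain ⟨h0, h1, hM⟩ := inv n
    obtain ⟨q1, q2, _⟩ := aux_key a e ha he (c n) h0 h1 hM
    exact ⟨q1, q2⟩
  have hmono : Monotone c := by
    apply monotone_nat_of_le_succ
    intro n
    obtain ⟨h0, h1, hM⟩ := inv n
    obtain ⟨_, _, _, _, _, hle⟩ := aux_key a e ha he (c n) h0 h1 hM
    rw [hrec n]; exact hle
  have hbdd : BddAbove (Set.range c) := by
    refine ⟨min 1 ((1 - 1/a)*e), ?_⟩
    rintro _ ⟨n, rfl⟩
    exact le_min (inv n).2.1 (inv n).2.2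
  set L := ⨆ n, c n with hLdef
  have hL : Filter.Tendsto c Filter.atTop (nhds L) := tendsto_atTop_ciSup hmono hbdd
  have hLle : L ≤ min 1 ((1 - 1/a)*e) :=
    ciSup_le fun n => le_min (inv n).2.1 (inv n).2.2
  have hL0 : 0 < L := lt_of_lt_of_le hc0_pos (le_ciSup hbdd 0)
  have hL1 : L ≤ 1 := le_trans hLle (min_le_left _ _)
  have hLM : L ≤ (1 - 1/a)*e := le_trans hLle (min_le_right _ _)
  obtain ⟨keL, kdL, _⟩ := aux_key a e ha he L hL0 hL1 hLM
  -- limit is a fixed point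
  have h1 : Filter.Tendsto (fun n => e - c n) Filter.atTop (nhds (e - L)) :=
    tendsto_const_nhds.sub hL
  have h2 : Filter.Tendsto (fun n => (e-1)/(e - c n)) Filter.atTop
      (nhds ((e-1)/(e-L))) := Filter.Tendsto.div tendsto_const_nhds h1 (ne_of_gt keL)
  have h3 : Filter.Tendsto (fun n => a - (e-1)/(e - c n)) Filter.atTop
      (nhds (a - (e-1)/(e-L))) := tendsto_const_nhds.sub h2
  have h4 : Filter.Tendsto (fun n => (a-1)/(a - (e-1)/(e - c n))) Filter.atTop
      (nhds ((a-1)/(a - (e-1)/(e-L)))) :=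
    Filter.Tendsto.div tendsto_const_nhds h3 (ne_of_gt kdL)
  have h5 : Filter.Tendsto (fun n => c (n+1)) Filter.atTop (nhds L) :=
    hL.comp (Filter.tendsto_add_atTop_nat 1)
  have h6 : Filter.Tendsto (fun n => c (n+1)) Filter.atTop
      (nhds ((a-1)/(a - (e-1)/(e-L)))) := by
    simpa only [← hrec] using h4
  have heq : L = (a-1)/(a - (e-1)/(e-L)) := tendsto_nhds_unique h5 h6
  -- solve fixed point equation
  have hfix : (L - 1) * (a * L - (a-1)*e) = 0 := by
    have hne1 : e - L ≠ 0 := ne_of_gt keL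
    have hne2 : a - (e-1)/(e-L) ≠ 0 := ne_of_gt kdL
    have hD : 0 < a * (e-L) - (e-1) := by
      have := (div_lt_iff₀ keL).mp (by linarith : (e-1)/(e-L) < a)
      linarith
    have hfx : (a-1)/(a-(e-1)/(e-L)) = (a-1)*(e-L) / (a*(e-L) - (e-1)) := by
      rw [div_eq_div_iff (ne_of_gt kdL) (ne_of_gt hD)]
      field_simp
    have heq' : L = (a-1)*(e-L) / (a*(e-L) - (e-1)) := heq.trans hfx
    have heq3 : L * (a * (e-L) - (e-1)) = (a-1)*(e-L) :=
      (eq_div_iff (ne_of_gt hD)).mp heq'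
    linear_combination -heq3
  have hMeq : (1 - 1/a)*e = (a-1)*e/a := by field_simp
  have hLeq : L = min 1 ((1 - 1/a)*e) := by
    rcases mul_eq_zero.mp hfix with h | h
    · have hL1' : L = 1 := by linarith
      exact le_antisymm hLle (by rw [hL1']; exact min_le_left _ _)
    · have hL' : L = (1 - 1/a)*e := by
        rw [hMeq, eq_div_iff (ne_of_gt ha0)]
        linarith
      exact le_antisymm hLle (by rw [hL']; exact min_le_right _ _)
  exact ⟨denoms, hmono, fun n => ⟨(inv n).2.1, (inv n).2.2⟩, hLeq ▸ hL⟩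
end
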